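/- Let δ > 0 and M₂ > 0, and set ε = √(2M₂δ) and L = 2√(2δ/M₂). Define f₁(t) = ε·t − M₂·t²/2 and f₂(t) = −f₁(t). Then f₁ and f₂ are twice differentiable with |f₁''(t)| = |f₂''(t)| = M₂ for all t, |f₁(t)| ≤ δ and |f₂(t)| ≤ δ for all t ∈ [0, L] (so both f₁ and f₂ lie within δ of the identically zero data function on [0, L]), f₁'(0) − f₂'(0) = 2√(2M₂δ), and consequently for every real number r, max(|r − f₁'(0)|, |r − f₂'(0)|) ≥ √(2M₂δ). -/

import Mathlib

/-- optimality of the bound `ε(δ) = √(2M₂δ)`.  With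
`ε = √(2M₂δ)`, `L = 2√(2δ/M₂)`, `f₁(t) = ε t - M₂ t²/2` and `f₂ = -f₁`:
both functions are twice differentiable with `|f''| = M₂` everywhere, both lie
within `δ` of the zero data function on `[0, L]`, their derivatives at `0`
differ by `2√(2M₂δ)`, and hence every real `r` is at distance at least
`√(2M₂δ)` from `f₁'(0)` or from `f₂'(0)`. -/
theorem stable_diff_bound_optimal
    (δ M₂ : ℝ) (hδ : 0 < δ) (hM₂ : 0 < M₂)
    (ε L : ℝ) (hε : ε = Real.sqrt (2 * M₂ * δ))
    (hL : L = 2 * Real.sqrt (2 * δ / M₂))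
    (f₁ f₂ : ℝ → ℝ)
    (hf₁ : ∀ t, f₁ t = ε * t - M₂ * t ^ 2 / 2)
    (hf₂ : ∀ t, f₂ t = -f₁ t) :
    (∀ t : ℝ, DifferentiableAt ℝ f₁ t ∧ DifferentiableAt ℝ (deriv f₁) t ∧
      DifferentiableAt ℝ f₂ t ∧ DifferentiableAt ℝ (deriv f₂) t ∧
      |deriv (deriv f₁) t| = M₂ ∧ |deriv (deriv f₂) t| = M₂) ∧
    (∀ t ∈ Set.Icc (0 : ℝ) L, |f₁ t| ≤ δ ∧ |f₂ t| ≤ δ) ∧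
    deriv f₁ 0 - deriv f₂ 0 = 2 * Real.sqrt (2 * M₂ * δ) ∧
    (∀ r : ℝ, Real.sqrt (2 * M₂ * δ) ≤
      max |r - deriv f₁ 0| |r - deriv f₂ 0|) := by
  have F1 : f₁ = fun t => ε * t - M₂ * t ^ 2 / 2 := funext hf₁
  have F2 : f₂ = fun t => -(ε * t - M₂ * t ^ 2 / 2) := by
    funext t; rw [hf₂ t, hf₁ t]
  have d1 : ∀ t : ℝ, HasDerivAt f₁ (ε - M₂ * t) t := by
    intro t
    rw [F1]
    have h := ((hasDerivAt_id t).const_mul ε).sub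
      (((hasDerivAt_pow 2 t).const_mul M₂).div_const 2)
    refine h.congr_deriv ?_
    simp
    ring
  have F2' : f₂ = fun x => -f₁ x := funext hf₂
  have d2 : ∀ t : ℝ, HasDerivAt f₂ (-(ε - M₂ * t)) t := by
    intro t
    rw [F2']
    exact (d1 t).neg
  have D1 : deriv f₁ = fun t => ε - M₂ * t := funext fun t => (d1 t).deriv
  have D2 : deriv f₂ = fun t => -(ε - M₂ * t) := funext fun t => (d2 t).deriv
  have dd1 : ∀ t : ℝ, HasDerivAt (deriv f₁) (-M₂) t := by
    intro t
    rw [D1]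
    have h := (hasDerivAt_const t ε).sub ((hasDerivAt_id t).const_mul M₂)
    exact h.congr_deriv (by simp)
  have dd2 : ∀ t : ℝ, HasDerivAt (deriv f₂) M₂ t := by
    intro t
    rw [D2]
    have h := ((hasDerivAt_const t ε).sub ((hasDerivAt_id t).const_mul M₂)).neg
    exact h.congr_deriv (by simp)
  have hεnn : 0 ≤ ε := hε ▸ Real.sqrt_nonneg _
  -- s = √(2δ/M₂)
  set s := Real.sqrt (2 * δ / M₂) with hs
  have hsnn : 0 ≤ s := Real.sqrt_nonneg _
  have hs2 : s ^ 2 = 2 * δ / M₂ := Real.sq_sqrt (by positivity)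
  have hεs : ε = M₂ * s := by
    rw [hε]
    have : 2 * M₂ * δ = (M₂ * s) ^ 2 := by
      rw [mul_pow, hs2]; field_simp
    rw [this, Real.sqrt_sq (by positivity)]
  have hε2 : ε ^ 2 = 2 * M₂ * δ := hε ▸ Real.sq_sqrt (by positivity)
  refine ⟨fun t => ⟨(d1 t).differentiableAt, (dd1 t).differentiableAt,
      (d2 t).differentiableAt, (dd2 t).differentiableAt, ?_, ?_⟩, ?_, ?_, ?_⟩
  · rw [(dd1 t).deriv, abs_neg, abs_of_pos hM₂]
  · rw [(dd2 t).deriv, abs_of_pos hM₂]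
  · intro t ht
    obtain ⟨ht0, htL⟩ := ht
    rw [hL] at htL
    have htL' : t ≤ 2 * s := htL
    have hf1t : f₁ t = ε * t - M₂ * t ^ 2 / 2 := hf₁ t
    have hδs : M₂ * s ^ 2 = 2 * δ := by
      rw [hs2]; field_simp
    have hlow : 0 ≤ f₁ t := by
      rw [hf1t, hεs]
      nlinarith [mul_nonneg (mul_nonneg hM₂.le ht0) (by linarith : (0:ℝ) ≤ 2 * s - t)]
    have hhigh : f₁ t ≤ δ := by
      rw [hf1t, hεs]
      nlinarith [mul_nonneg hM₂.le (sq_nonneg (s - t))]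
    constructor
    · rw [abs_of_nonneg hlow]; exact hhigh
    · rw [hf₂ t, abs_neg, abs_of_nonneg hlow]; exact hhigh
  · rw [(d1 0).deriv, (d2 0).deriv, ← hε]; ring
  · intro r
    rw [(d1 0).deriv, (d2 0).deriv, ← hε]
    simp only [mul_zero, sub_zero, neg_sub, sub_neg_eq_add]
    rcases le_total r 0 with h | h
    · refine le_max_of_le_left ?_
      rw [abs_sub_comm]
      exact le_trans (by linarith) (le_abs_self _)
    · exact le_max_of_le_right (le_trans (by linarith) (le_abs_self _))
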